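/- In a triangulated category T with countable direct products, let J be a homological ideal with enough J-injectives. If ι : N → A is a J-monic morphism fitting in an exact triangle N → A → I → ΣN with I J-injective, then ι is J-coversal: every morphism f : B → A lying in J(B, A) factors through ι. -/
import Mathlib


open CategoryTheory CategoryTheory.Pretriangulated

/-- In a triangulated category, if `ι : N ⟶ A` is a `J`-monic morphism (a morphism in
the homological ideal `J`) fitting into an exact triangle `N → A → I → ΣN` with `I`
`J`-injective, then `ι` is `J`-coversal: every morphism `f : B ⟶ A` lying in `J(B,A)`
factors through `ι`. -/
theorem coversal_of_J_monic
    {C : Type*} [Category C] [Limits.HasZeroObject C] [HasShift C ℤ]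
    [Preadditive C] [∀ n : ℤ, (CategoryTheory.shiftFunctor C n).Additive]
    [Pretriangulated C]
    (J : ∀ X Y : C, Set (X ⟶ Y))
    (hJpre : ∀ {X Y Z : C} (g : X ⟶ Y) (f : Y ⟶ Z), f ∈ J Y Z → (g ≫ f) ∈ J X Z)
    (hJpost : ∀ {X Y Z : C} (f : X ⟶ Y) (g : Y ⟶ Z), f ∈ J X Y → (f ≫ g) ∈ J X Z)
    (N A I : C) (ι : N ⟶ A) (π : A ⟶ I) (δ : I ⟶ (shiftFunctor C (1 : ℤ)).obj N)
    (hdist : Triangle.mk ι π δ ∈ distinguishedTriangles (C := C))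
    (hι : ι ∈ J N A)
    (hIinj : ∀ {X Y : C} (f : X ⟶ Y), f ∈ J X Y → ∀ g : Y ⟶ I, f ≫ g = 0) :
    ∀ (B : C) (f : B ⟶ A), f ∈ J B A → ∃ g : B ⟶ N, g ≫ ι = f := by
  intro B f hf
  obtain ⟨g, hg⟩ := Triangle.coyoneda_exact₂ _ hdist f (hIinj f hf π)
  exact ⟨g, hg.symm⟩
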